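/- Let G = (V, E) be a finite directed graph with no self-loops and let (x, a) ∈ ℤ^V × ℤ^E satisfy x_u − x_v = a_{(u,v)} for every (u,v) ∈ E. (i) Suppose x_v > 0 for some v; let k = max{x_v : v ∈ V, x_v > 0}, and let S be the vertex set of a connected component of the subgraph induced by {v ∈ V : x_v = k}. Then (χ_S, χ_{δ⁺(S)} − χ_{δ⁻(S)}) ⊑ (x, a). (ii) Suppose x_v < 0 for some v; let k = min{x_v : v ∈ V, x_v < 0}, and let S be the vertex set of a connected component of the subgraph induced by {v ∈ V : x_v = k}. Then (−χ_S, −χ_{δ⁺(S)} + χ_{δ⁻(S)}) ⊑ (x, a). -/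

import Mathlib

open scoped Classical

/-- The undirected support graph of the directed edge set `E`. -/
def undirGraph {V : Type*} (E : Finset (V × V)) : SimpleGraph V where
  Adj u v := u ≠ v ∧ ((u, v) ∈ E ∨ (v, u) ∈ E)
  symm := by
    constructor
    intro u v h
    exact ⟨h.1.symm, h.2.elim Or.inr Or.inl⟩
  loopless := by constructor; intro u h; exact h.1 rfl

/-- `S ⊆ V` induces a connected subgraph of the (undirected version of the) graph. -/
def InducesConnected {V : Type*} (E : Finset (V × V)) (S : Set V) : Prop :=
  S.Nonempty ∧ ((undirGraph E).induce S).Connected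

/-- Integer indicator vector of a set of vertices. -/
noncomputable def chiV {V : Type*} (S : Set V) : V → ℤ :=
  S.indicator 1

/-- Integer indicator vector of a set of edges. -/
noncomputable def chiE {V : Type*} {E : Finset (V × V)}
    (T : Set {e : V × V // e ∈ E}) : {e : V × V // e ∈ E} → ℤ :=
  T.indicator 1

/-- Outgoing edges of `S`. -/
def deltaPlus {V : Type*} (E : Finset (V × V)) (S : Set V) :
    Set {e : V × V // e ∈ E} :=
  {e | (e : V × V).1 ∈ S ∧ (e : V × V).2 ∉ S}

/-- Incoming edges of `S`. -/
def deltaMinus {V : Type*} (E : Finset (V × V)) (S : Set V) :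
    Set {e : V × V // e ∈ E} :=
  {e | (e : V × V).1 ∉ S ∧ (e : V × V).2 ∈ S}

/-- The conformal (sign-compatible, coordinatewise) partial order `x ⊑ y`. -/
def Sqle {ι : Type*} (x y : ι → ℤ) : Prop :=
  ∀ i, 0 ≤ x i * y i ∧ |x i| ≤ |y i|

/-- `(x, a)` lies in the integer kernel of `A_TV`. -/
def InKerATV {V : Type*} (E : Finset (V × V)) (x : V → ℤ)
    (a : {e : V × V // e ∈ E} → ℤ) : Prop :=
  ∀ e : {e : V × V // e ∈ E}, x (e : V × V).1 - x (e : V × V).2 = a e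

/-- `(x, a)` is a Graver basis element of `A_TV`: a `⊑`-minimal nonzero
element of the integer kernel. -/
def InGraverATV {V : Type*} (E : Finset (V × V)) (x : V → ℤ)
    (a : {e : V × V // e ∈ E} → ℤ) : Prop :=
  InKerATV E x a ∧ ¬(x = 0 ∧ a = 0) ∧
    ∀ (x' : V → ℤ) (a' : {e : V × V // e ∈ E} → ℤ),
      InKerATV E x' a' → ¬(x' = 0 ∧ a' = 0) → Sqle x' x → Sqle a' a →
        x' = x ∧ a' = a

/-- `S` is the vertex set of a connected component of the subgraph induced by
`W`: `S ⊆ W`, `S` induces a connected subgraph, and `S` is maximal with these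
properties. -/
def IsConnCompOf {V : Type*} (E : Finset (V × V)) (W S : Set V) : Prop :=
  S ⊆ W ∧ InducesConnected E S ∧
    ∀ S' : Set V, S ⊆ S' → S' ⊆ W → InducesConnected E S' → S' = S

lemma insert_conn {V : Type*} {G : SimpleGraph V} {S : Set V} {u v : V}
    (hu : u ∈ S) (hadj : G.Adj u v) (hS : (G.induce S).Connected) :
    (G.induce (insert v S)).Connected := by
  have h := SimpleGraph.induce_union_connected hS.preconnected
    (SimpleGraph.induce_pair_connected_of_adj hadj).preconnected ⟨u, hu, by simp⟩
  have : S ∪ {u, v} = insert v S := by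
    ext w; simp only [Set.mem_union, Set.mem_insert_iff, Set.mem_singleton_iff]
    constructor
    · rintro (h | h | h) <;> simp_all
    · rintro (h | h) <;> simp_all
  rwa [this] at h

lemma not_level_neighbor {V : Type*} (E : Finset (V × V)) (k : ℤ) (x : V → ℤ)
    (S : Set V) (hS : IsConnCompOf E {v | x v = k} S) {u v : V}
    (hu : u ∈ S) (hv : v ∉ S) (he : (u, v) ∈ E ∨ (v, u) ∈ E) : x v ≠ k := by
  intro hxv
  have hne : u ≠ v := fun h => hv (h ▸ hu)
  have hadj : (undirGraph E).Adj u v := ⟨hne, he⟩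
  have hconn := insert_conn hu hadj hS.2.1.2
  have heq := hS.2.2 (insert v S) (Set.subset_insert _ _)
    (by rintro w (rfl | hw); exacts [hxv, hS.1 hw])
    ⟨⟨v, Set.mem_insert _ _⟩, hconn⟩
  exact hv (heq ▸ Set.mem_insert v S)

/-- If `(x, a)` lies in the integer kernel of `A_TV`, `k` is
the largest positive value of `x` and `S` is a connected component of the level
set `{v : x_v = k}`, then `(χ_S, χ_{δ⁺(S)} − χ_{δ⁻(S)}) ⊑ (x, a)`; and the
analogous statement for the smallest negative value. -/
theorem level_set_component_majorized
    {V : Type*} [Fintype V] [DecidableEq V] (E : Finset (V × V))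
    (hloop : ∀ e ∈ E, e.1 ≠ e.2)
    (x : V → ℤ) (a : {e : V × V // e ∈ E} → ℤ)
    (hker : InKerATV E x a) :
    (∀ (k : ℤ) (S : Set V),
      IsGreatest {n : ℤ | 0 < n ∧ ∃ v, x v = n} k →
      IsConnCompOf E {v | x v = k} S →
      Sqle (chiV S) x ∧
        Sqle (chiE (deltaPlus E S) - chiE (deltaMinus E S)) a) ∧
    (∀ (k : ℤ) (S : Set V),
      IsLeast {n : ℤ | n < 0 ∧ ∃ v, x v = n} k →
      IsConnCompOf E {v | x v = k} S →
      Sqle (-chiV S) x ∧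
        Sqle (-chiE (deltaPlus E S) + chiE (deltaMinus E S)) a) := by
  constructor
  · intro k S hk hS
    have hk1 : 1 ≤ k := hk.1.1
    have hxS : ∀ v ∈ S, x v = k := fun v hv => hS.1 hv
    have hle : ∀ v, x v ≤ k := by
      intro v
      by_cases h : 0 < x v
      · exact hk.2 ⟨h, v, rfl⟩
      · linarith [not_lt.mp h]
    constructor
    · intro i
      by_cases hi : i ∈ S
      · have := hxS i hi
        simp only [chiV, Set.indicator_of_mem hi, Pi.one_apply, this]
        constructor
        · linarith
        · rw [abs_one, abs_of_pos (by linarith : (0:ℤ) < k)]; exact hk1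
      · simp [chiV, Set.indicator_of_notMem hi]
    · intro e
      obtain ⟨⟨u, v⟩, he⟩ := e
      have ha : x u - x v = a ⟨(u, v), he⟩ := hker ⟨(u, v), he⟩
      by_cases hu : u ∈ S <;> by_cases hv : v ∈ S
      · have h1 : (⟨(u, v), he⟩ : {e : V × V // e ∈ E}) ∉ deltaPlus E S := fun h => h.2 hv
        have h2 : (⟨(u, v), he⟩ : {e : V × V // e ∈ E}) ∉ deltaMinus E S := fun h => h.1 hu
        simp [chiE, Set.indicator_of_notMem h1, Set.indicator_of_notMem h2]
      · have h1 : (⟨(u, v), he⟩ : {e : V × V // e ∈ E}) ∈ deltaPlus E S := ⟨hu, hv⟩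
        have h2 : (⟨(u, v), he⟩ : {e : V × V // e ∈ E}) ∉ deltaMinus E S := fun h => h.1 hu
        have hvk : x v ≠ k := not_level_neighbor E k x S hS hu hv (Or.inl he)
        have hav : 1 ≤ a ⟨(u, v), he⟩ := by
          rw [← ha, hxS u hu]
          have := hle v
          omega
        simp only [chiE, Pi.sub_apply, Set.indicator_of_mem h1,
          Set.indicator_of_notMem h2, Pi.one_apply, sub_zero]
        constructor
        · linarith
        · rw [abs_one, abs_of_pos (by linarith : (0:ℤ) < a ⟨(u, v), he⟩)]; exact hav
      · have h1 : (⟨(u, v), he⟩ : {e : V × V // e ∈ E}) ∉ deltaPlus E S := fun h => hu h.1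
        have h2 : (⟨(u, v), he⟩ : {e : V × V // e ∈ E}) ∈ deltaMinus E S := ⟨hu, hv⟩
        have huk : x u ≠ k := not_level_neighbor E k x S hS hv hu (Or.inr he)
        have hav : a ⟨(u, v), he⟩ ≤ -1 := by
          rw [← ha, hxS v hv]
          have := hle u
          omega
        simp only [chiE, Pi.sub_apply, Set.indicator_of_notMem h1,
          Set.indicator_of_mem h2, Pi.one_apply, zero_sub]
        constructor
        · nlinarith
        · rw [abs_neg, abs_one, abs_of_neg (by linarith : a ⟨(u, v), he⟩ < 0)]
          linarith
      · have h1 : (⟨(u, v), he⟩ : {e : V × V // e ∈ E}) ∉ deltaPlus E S := fun h => hu h.1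
        have h2 : (⟨(u, v), he⟩ : {e : V × V // e ∈ E}) ∉ deltaMinus E S := fun h => hv h.2
        simp [chiE, Set.indicator_of_notMem h1, Set.indicator_of_notMem h2]
  · intro k S hk hS
    have hk1 : k ≤ -1 := by have := hk.1.1; omega
    have hxS : ∀ v ∈ S, x v = k := fun v hv => hS.1 hv
    have hle : ∀ v, k ≤ x v := by
      intro v
      by_cases h : x v < 0
      · exact hk.2 ⟨h, v, rfl⟩
      · linarith [not_lt.mp h]
    constructor
    · intro i
      by_cases hi : i ∈ S
      · have := hxS i hi
        simp only [Pi.neg_apply, chiV, Set.indicator_of_mem hi, Pi.one_apply, this]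
        constructor
        · nlinarith
        · rw [abs_neg, abs_one, abs_of_neg (by linarith : k < 0)]; linarith
      · simp [chiV, Set.indicator_of_notMem hi]
    · intro e
      obtain ⟨⟨u, v⟩, he⟩ := e
      have ha : x u - x v = a ⟨(u, v), he⟩ := hker ⟨(u, v), he⟩
      by_cases hu : u ∈ S <;> by_cases hv : v ∈ S
      · have h1 : (⟨(u, v), he⟩ : {e : V × V // e ∈ E}) ∉ deltaPlus E S := fun h => h.2 hv
        have h2 : (⟨(u, v), he⟩ : {e : V × V // e ∈ E}) ∉ deltaMinus E S := fun h => h.1 hu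
        simp [chiE, Set.indicator_of_notMem h1, Set.indicator_of_notMem h2]
      · have h1 : (⟨(u, v), he⟩ : {e : V × V // e ∈ E}) ∈ deltaPlus E S := ⟨hu, hv⟩
        have h2 : (⟨(u, v), he⟩ : {e : V × V // e ∈ E}) ∉ deltaMinus E S := fun h => h.1 hu
        have hvk : x v ≠ k := not_level_neighbor E k x S hS hu hv (Or.inl he)
        have hav : a ⟨(u, v), he⟩ ≤ -1 := by
          rw [← ha, hxS u hu]
          have := hle v
          omega
        simp only [chiE, Pi.add_apply, Pi.neg_apply, Set.indicator_of_mem h1,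
          Set.indicator_of_notMem h2, Pi.one_apply, add_zero]
        constructor
        · nlinarith
        · rw [abs_neg, abs_one, abs_of_neg (by linarith : a ⟨(u, v), he⟩ < 0)]
          linarith
      · have h1 : (⟨(u, v), he⟩ : {e : V × V // e ∈ E}) ∉ deltaPlus E S := fun h => hu h.1
        have h2 : (⟨(u, v), he⟩ : {e : V × V // e ∈ E}) ∈ deltaMinus E S := ⟨hu, hv⟩
        have huk : x u ≠ k := not_level_neighbor E k x S hS hv hu (Or.inr he)
        have hav : 1 ≤ a ⟨(u, v), he⟩ := by
          rw [← ha, hxS v hv]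
          have := hle u
          omega
        simp only [chiE, Pi.add_apply, Pi.neg_apply, Set.indicator_of_notMem h1,
          Set.indicator_of_mem h2, Pi.one_apply, neg_zero, zero_add]
        constructor
        · linarith
        · rw [abs_one, abs_of_pos (by linarith : (0:ℤ) < a ⟨(u, v), he⟩)]; exact hav
      · have h1 : (⟨(u, v), he⟩ : {e : V × V // e ∈ E}) ∉ deltaPlus E S := fun h => hu h.1
        have h2 : (⟨(u, v), he⟩ : {e : V × V // e ∈ E}) ∉ deltaMinus E S := fun h => hv h.2
        simp [chiE, Set.indicator_of_notMem h1, Set.indicator_of_notMem h2]
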